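/- If q is a primitive N-th root of unity with N odd, then for each k ∈ ℤⁿ the N-th power of the Weyl-ordered monomial satisfies (X_k)^N = X_{Nk} = (X_1^N)^{k_1} ⋯ (X_n^N)^{k_n}; in particular (X_k)^N lies in the subalgebra generated by the elements X_i^N. -/

import Mathlib

open scoped BigOperators

/-- The antisymmetric bilinear form on `ℤⁿ` determined by the matrix `σ`. -/
def sigmaForm {n : ℕ} (σ : Fin n → Fin n → ℤ) (k l : Fin n → ℤ) : ℤ :=
  ∑ i, ∑ j, k i * l j * σ i j

/-- The Weyl quantum ordered monomial `X_k = q^{-Σ_{i<j} k_i k_j σ_{ij}} X_1^{k_1} ⋯ X_n^{k_n}`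
associated to a family of invertible elements `X` of a `ℂ`-algebra. -/
noncomputable def weyl (q : ℂ) {n : ℕ} (σ : Fin n → Fin n → ℤ)
    {A : Type*} [Ring A] [Algebra ℂ A] (X : Fin n → Aˣ) (k : Fin n → ℤ) : A :=
  algebraMap ℂ A (q ^ (-(∑ i : Fin n, ∑ j : Fin n, if i < j then k i * k j * σ i j else 0))) *
    ((List.ofFn fun i => X i ^ k i).prod : Aˣ)


open scoped BigOperators

private lemma comm_one {G : Type*} [Group G] (z x y : G) (hz : ∀ g, z * g = g * z)
    (h : x * y = z * (y * x)) (b : ℤ) : x * y ^ b = z ^ b * (y ^ b * x) := by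
  have hconj : (MulAut.conj x) y = z * y := by
    rw [MulAut.conj_apply, h, mul_assoc, mul_assoc, mul_inv_cancel, mul_one]
  have h1 : x * y ^ b * x⁻¹ = z ^ b * y ^ b := by
    have h2 := map_zpow (MulAut.conj x) y b
    rw [MulAut.conj_apply, hconj] at h2
    rw [h2, Commute.mul_zpow (hz y) b]
  calc x * y ^ b = x * y ^ b * x⁻¹ * x := by group
    _ = z ^ b * y ^ b * x := by rw [h1]
    _ = z ^ b * (y ^ b * x) := by rw [mul_assoc]

private lemma comm_zpow {G : Type*} [Group G] (z x y : G) (hz : ∀ g, z * g = g * z)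
    (h : x * y = z * (y * x)) (a b : ℤ) :
    x ^ a * y ^ b = z ^ (a * b) * (y ^ b * x ^ a) := by
  have h1 := comm_one z x y hz h b
  have h2 : y ^ b * x = (z ^ b)⁻¹ * (x * y ^ b) := by
    rw [h1]; group
  have hz' : ∀ g, (z ^ b)⁻¹ * g = g * (z ^ b)⁻¹ := by
    intro g
    have : z ^ b * g = g * z ^ b := by
      have hc : Commute z g := hz g
      exact (hc.zpow_left b).eq
    calc (z ^ b)⁻¹ * g = (z ^ b)⁻¹ * g * (z ^ b) * (z ^ b)⁻¹ := by group
      _ = (z ^ b)⁻¹ * (z ^ b) * g * (z ^ b)⁻¹ := by rw [mul_assoc ((z^b)⁻¹), ← this, ← mul_assoc]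
      _ = g * (z ^ b)⁻¹ := by group
  have h3 := comm_one ((z ^ b)⁻¹) (y ^ b) x hz' h2 a
  -- h3 : y ^ b * x ^ a = ((z ^ b)⁻¹) ^ a * (x ^ a * y ^ b)
  rw [h3]
  have : ((z ^ b)⁻¹) ^ a = (z ^ (a * b))⁻¹ := by
    rw [← zpow_neg, ← zpow_mul, ← zpow_neg]; ring_nf
  rw [this]
  group
open scoped BigOperators

private lemma prod_zpow' {Z : Type*} [CommGroup Z] (a : Z) {ι : Type*} (s : Finset ι) (f : ι → ℤ) :
    ∏ i ∈ s, a ^ f i = a ^ (∑ i ∈ s, f i) := by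
  induction s using Finset.cons_induction with
  | empty => simp
  | cons i s hi ih => rw [Finset.prod_cons, Finset.sum_cons, ih, zpow_add]

private lemma prod_pull {G Z : Type*} [Group G] [CommGroup Z] (φ : Z →* G)
    (hφ : ∀ z g, φ z * g = g * φ z) :
    ∀ (n : ℕ) (u : Fin n → G) (w : G) (z : Fin n → Z),
    (∀ i, u i * w = φ (z i) * (w * u i)) →
    (List.ofFn u).prod * w = φ (∏ i, z i) * (w * (List.ofFn u).prod) := by
  intro n
  induction n with
  | zero => intro u w z _; simp
  | succ n ih =>
    intro u w z hc
    rw [List.ofFn_succ, List.prod_cons, Fin.prod_univ_succ]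
    have h1 := ih (fun i => u i.succ) w (fun i => z i.succ) (fun i => hc i.succ)
    try simp only at h1
    calc u 0 * (List.ofFn fun i => u i.succ).prod * w
        = u 0 * ((List.ofFn fun i => u i.succ).prod * w) := by rw [mul_assoc]
      _ = u 0 * (φ (∏ i : Fin n, z i.succ) * (w * (List.ofFn fun i => u i.succ).prod)) := by
          rw [h1]
      _ = (u 0 * φ (∏ i : Fin n, z i.succ)) * (w * (List.ofFn fun i => u i.succ).prod) := by
          rw [mul_assoc]
      _ = (φ (∏ i : Fin n, z i.succ) * u 0) * (w * (List.ofFn fun i => u i.succ).prod) := by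
          rw [hφ]
      _ = φ (∏ i : Fin n, z i.succ) * ((u 0 * w) * (List.ofFn fun i => u i.succ).prod) := by
          rw [mul_assoc, mul_assoc]
      _ = φ (∏ i : Fin n, z i.succ) *
            ((φ (z 0) * (w * u 0)) * (List.ofFn fun i => u i.succ).prod) := by
          rw [hc 0]
      _ = φ (z 0 * ∏ i : Fin n, z i.succ) * (w * (u 0 * (List.ofFn fun i => u i.succ).prod)) := by
          rw [map_mul, ← mul_assoc (φ (∏ i : Fin n, z i.succ)), ← hφ]
          group
      _ = _ := by rw [mul_comm (z 0)]

private lemma prod_merge {G Z : Type*} [Group G] [CommGroup Z] (φ : Z →* G)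
    (hφ : ∀ z g, φ z * g = g * φ z) :
    ∀ (n : ℕ) (u v : Fin n → G) (z : Fin n → Fin n → Z),
    (∀ i j, j < i → u i * v j = φ (z i j) * (v j * u i)) →
    (List.ofFn u).prod * (List.ofFn v).prod =
      φ (∏ i, ∏ j, if j < i then z i j else 1) * (List.ofFn fun i => u i * v i).prod := by
  intro n
  induction n with
  | zero => intro u v z _; simp
  | succ n ih =>
    intro u v z hc
    have hpull := prod_pull φ hφ n (fun i => u i.succ) (v 0) (fun i => z i.succ 0)
      (fun i => hc i.succ 0 (Fin.succ_pos i))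
    have hih := ih (fun i => u i.succ) (fun i => v i.succ) (fun i j => z i.succ j.succ)
      (fun i j hij => hc i.succ j.succ (by simpa using hij))
    try simp only at hpull hih
    have hscal : (∏ i, ∏ j, if j < i then z i j else 1) =
        (∏ i : Fin n, z i.succ 0) * ∏ i : Fin n, ∏ j : Fin n,
          (if j < i then z i.succ j.succ else 1) := by
      rw [Fin.prod_univ_succ]
      have h0 : (∏ j : Fin (n+1), if j < (0 : Fin (n+1)) then z 0 j else 1) = 1 := by
        apply Finset.prod_eq_one; intro j _
        simp
      rw [h0, one_mul, ← Finset.prod_mul_distrib]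
      apply Finset.prod_congr rfl
      intro i _
      rw [Fin.prod_univ_succ]
      congr 1
      · simp [Fin.succ_pos]
    rw [List.ofFn_succ, List.ofFn_succ, List.prod_cons, List.prod_cons, hscal, map_mul]
    calc u 0 * (List.ofFn fun i => u i.succ).prod * (v 0 * (List.ofFn fun i => v i.succ).prod)
        = u 0 * ((List.ofFn fun i => u i.succ).prod * v 0) *
            (List.ofFn fun i => v i.succ).prod := by group
      _ = u 0 * (φ (∏ i : Fin n, z i.succ 0) * (v 0 * (List.ofFn fun i => u i.succ).prod)) *
            (List.ofFn fun i => v i.succ).prod := by rw [hpull]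
      _ = φ (∏ i : Fin n, z i.succ 0) * ((u 0 * v 0) *
            ((List.ofFn fun i => u i.succ).prod * (List.ofFn fun i => v i.succ).prod)) := by
          rw [← mul_assoc, ← hφ]; group
      _ = φ (∏ i : Fin n, z i.succ 0) * ((u 0 * v 0) *
            (φ (∏ i : Fin n, ∏ j : Fin n, if j < i then z i.succ j.succ else 1) *
             (List.ofFn fun i => u i.succ * v i.succ).prod)) := by rw [hih]
      _ = _ := by
          rw [List.ofFn_succ, List.prod_cons]
          rw [← mul_assoc (u 0 * v 0), ← hφ]
          group


private lemma weyl_mul_aux {n : ℕ} (q : ℂ) (hq0 : q ≠ 0) (σ : Fin n → Fin n → ℤ)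
    (hσ : ∀ i j, σ i j = -σ j i)
    {A : Type*} [Ring A] [Algebra ℂ A] (X : Fin n → Aˣ)
    (hrel : ∀ i j, (X i : A) * X j = algebraMap ℂ A (q ^ (2 * σ i j)) * ((X j : A) * X i))
    (k : Fin n → ℤ) (c : ℤ) :
    weyl q σ X k * weyl q σ X (fun i => c * k i) = weyl q σ X (fun i => (c + 1) * k i) := by
  set qu : ℂˣ := Units.mk0 q hq0 with hqu
  set φ : ℂˣ →* Aˣ := Units.map (algebraMap ℂ A : ℂ →* A) with hphi
  have hφval : ∀ m : ℤ, ((φ (qu ^ m) : Aˣ) : A) = algebraMap ℂ A (q ^ m) := by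
    intro m
    have h1 : ((φ (qu ^ m) : Aˣ) : A) = algebraMap ℂ A ((qu ^ m : ℂˣ) : ℂ) := rfl
    rw [h1, Units.val_zpow_eq_zpow_val, Units.val_mk0]
  have hφc : ∀ z g, φ z * g = g * φ z := by
    intro z g
    apply Units.ext
    rw [Units.val_mul, Units.val_mul]
    exact (Algebra.commutes (z : ℂ) (g : A))
  have hrelU : ∀ i j, X i * X j = φ (qu ^ (2 * σ i j)) * (X j * X i) := by
    intro i j
    apply Units.ext
    rw [Units.val_mul, Units.val_mul, hφval]
    exact hrel i j
  have hzpow : ∀ i j (a b : ℤ),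
      X i ^ a * X j ^ b = φ (qu ^ (2 * σ i j * a * b)) * (X j ^ b * X i ^ a) := by
    intro i j a b
    have h := comm_zpow (φ (qu ^ (2 * σ i j))) (X i) (X j) (hφc _) (hrelU i j) a b
    rw [← map_zpow, ← zpow_mul] at h
    rw [h]
    congr 2
    ring
  set S1 := ∑ i : Fin n, ∑ j : Fin n, (if i < j then k i * k j * σ i j else 0) with hS1
  have hmerge := prod_merge φ hφc n (fun i => X i ^ k i) (fun i => X i ^ (c * k i))
      (fun i j => qu ^ (2 * σ i j * k i * (c * k j)))
      (fun i j _ => hzpow i j (k i) (c * k j))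
  try simp only at hmerge
  have hsc : (∏ i : Fin n, ∏ j : Fin n,
        if j < i then qu ^ (2 * σ i j * k i * (c * k j)) else 1)
      = qu ^ (∑ i : Fin n, ∑ j : Fin n, if j < i then 2 * σ i j * k i * (c * k j) else 0) := by
    rw [← prod_zpow']
    apply Finset.prod_congr rfl; intro i _
    rw [← prod_zpow']
    apply Finset.prod_congr rfl; intro j _
    split_ifs <;> simp
  have hE : (∑ i : Fin n, ∑ j : Fin n, if j < i then 2 * σ i j * k i * (c * k j) else 0)
      = -2 * c * S1 := by
    rw [Finset.sum_comm, hS1, Finset.mul_sum]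
    apply Finset.sum_congr rfl; intro i _
    rw [Finset.mul_sum]
    apply Finset.sum_congr rfl; intro j _
    split_ifs with h
    · rw [hσ j i]; ring
    · ring
  have hS2 : (∑ i : Fin n, ∑ j : Fin n, if i < j then (c * k i) * (c * k j) * σ i j else 0)
      = c * c * S1 := by
    rw [hS1, Finset.mul_sum]
    apply Finset.sum_congr rfl; intro i _
    rw [Finset.mul_sum]
    apply Finset.sum_congr rfl; intro j _
    split_ifs <;> ring
  have hS3 : (∑ i : Fin n, ∑ j : Fin n,
        if i < j then ((c + 1) * k i) * ((c + 1) * k j) * σ i j else 0)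
      = (c + 1) * (c + 1) * S1 := by
    rw [hS1, Finset.mul_sum]
    apply Finset.sum_congr rfl; intro i _
    rw [Finset.mul_sum]
    apply Finset.sum_congr rfl; intro j _
    split_ifs <;> ring
  have hW : (List.ofFn fun i => X i ^ k i * X i ^ (c * k i)).prod
      = (List.ofFn fun i => X i ^ ((c + 1) * k i)).prod := by
    have h : (fun i : Fin n => X i ^ k i * X i ^ (c * k i))
        = fun i => X i ^ ((c + 1) * k i) := by
      funext i; rw [← zpow_add]; congr 1; ring
    rw [h]
  simp only [weyl]
  rw [hS2, hS3]
  calc algebraMap ℂ A (q ^ (-S1)) * ((List.ofFn fun i => X i ^ k i).prod : Aˣ) *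
        (algebraMap ℂ A (q ^ (-(c * c * S1))) *
          ((List.ofFn fun i => X i ^ (c * k i)).prod : Aˣ))
      = algebraMap ℂ A (q ^ (-S1)) * algebraMap ℂ A (q ^ (-(c * c * S1))) *
          (((List.ofFn fun i => X i ^ k i).prod : Aˣ) : A) *
          (((List.ofFn fun i => X i ^ (c * k i)).prod : Aˣ) : A) := by
        rw [mul_assoc (algebraMap ℂ A (q ^ (-S1))),
          ← mul_assoc ((((List.ofFn fun i => X i ^ k i).prod : Aˣ) : A)),
          ← Algebra.commutes (q ^ (-(c * c * S1)))]
        rw [← mul_assoc, ← mul_assoc, mul_assoc _ _ ((((List.ofFn fun i => X i ^ (c * k i)).prod : Aˣ) : A))]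
    _ = algebraMap ℂ A (q ^ (-S1)) * algebraMap ℂ A (q ^ (-(c * c * S1))) *
          ((((List.ofFn fun i => X i ^ k i).prod : Aˣ) *
            ((List.ofFn fun i => X i ^ (c * k i)).prod : Aˣ) : Aˣ) : A) := by
        rw [Units.val_mul, mul_assoc]
    _ = algebraMap ℂ A (q ^ (-S1)) * algebraMap ℂ A (q ^ (-(c * c * S1))) *
          (algebraMap ℂ A (q ^ (-2 * c * S1)) *
            (((List.ofFn fun i => X i ^ ((c + 1) * k i)).prod : Aˣ) : A)) := by
        rw [hmerge, hsc, hE, hW, Units.val_mul, hφval]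
    _ = algebraMap ℂ A (q ^ (-((c + 1) * (c + 1) * S1))) *
          (((List.ofFn fun i => X i ^ ((c + 1) * k i)).prod : Aˣ) : A) := by
        rw [← mul_assoc, ← map_mul, ← map_mul, ← zpow_add₀ hq0, ← zpow_add₀ hq0]
        congr 2
        ring

/-- If `q` is a primitive `N`-th root of unity with `N` odd, then
`(X_k)^N = X_{Nk} = (X_1^N)^{k_1} ⋯ (X_n^N)^{k_n}`; in particular `(X_k)^N` lies in the
subalgebra generated by the elements `X_i^N` (and their inverses, the generators being
invertible). -/

theorem weyl_pow_N {n : ℕ} (N : ℕ) (hN : Odd N) (q : ℂ) (hq : IsPrimitiveRoot q N)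
    (σ : Fin n → Fin n → ℤ) (hσ : ∀ i j, σ i j = -σ j i)
    {A : Type*} [Ring A] [Algebra ℂ A] (X : Fin n → Aˣ)
    (hrel : ∀ i j, (X i : A) * X j = algebraMap ℂ A (q ^ (2 * σ i j)) * ((X j : A) * X i))
    (k : Fin n → ℤ) :
    (weyl q σ X k) ^ N = weyl q σ X (fun i => (N : ℤ) * k i) ∧
    (weyl q σ X k) ^ N = ((List.ofFn fun i => (X i ^ (N : ℤ)) ^ k i).prod : Aˣ) ∧
    (weyl q σ X k) ^ N ∈
      Algebra.adjoin ℂ ((Set.range fun i => ((X i : A) ^ N)) ∪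
        (Set.range fun i => (((X i)⁻¹ : Aˣ) : A) ^ N)) := by
  have hNpos : 0 < N := hN.pos
  have hq0 : q ≠ 0 := by
    intro h
    have h1 := hq.pow_eq_one
    rw [h, zero_pow hNpos.ne'] at h1
    exact zero_ne_one h1
  have key : ∀ m : ℕ, weyl q σ X k ^ m = weyl q σ X fun i => (m : ℤ) * k i := by
    intro m
    induction m with
    | zero => simp [weyl, List.prod_ofFn]
    | succ m ih =>
      rw [pow_succ', ih, weyl_mul_aux q hq0 σ hσ X hrel k (m : ℤ)]
      have hfun : (fun i => ((m : ℤ) + 1) * k i) = fun i => (((m + 1 : ℕ)) : ℤ) * k i := by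
        funext i; push_cast; ring
      rw [hfun]
  have eq1 : (weyl q σ X k) ^ N = weyl q σ X (fun i => (N : ℤ) * k i) := key N
  have eq2 : weyl q σ X (fun i => (N : ℤ) * k i)
      = ((List.ofFn fun i => (X i ^ (N : ℤ)) ^ k i).prod : Aˣ) := by
    simp only [weyl]
    have hS : (∑ i : Fin n, ∑ j : Fin n,
          if i < j then ((N : ℤ) * k i) * ((N : ℤ) * k j) * σ i j else 0)
        = (N : ℤ) * ((N : ℤ) * (∑ i : Fin n, ∑ j : Fin n,
            if i < j then k i * k j * σ i j else 0)) := by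
      simp only [Finset.mul_sum]
      apply Finset.sum_congr rfl; intro i _
      apply Finset.sum_congr rfl; intro j _
      split_ifs <;> ring
    rw [hS]
    have hq1 : q ^ (-((N : ℤ) * ((N : ℤ) * (∑ i : Fin n, ∑ j : Fin n,
        if i < j then k i * k j * σ i j else 0)))) = 1 := by
      rw [zpow_neg, zpow_mul, zpow_natCast, hq.pow_eq_one, one_zpow, inv_one]
    rw [hq1, map_one, one_mul]
    have h : (fun i : Fin n => X i ^ ((N : ℤ) * k i)) = fun i => (X i ^ (N : ℤ)) ^ k i := by
      funext i; rw [zpow_mul]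
    rw [h]
  refine ⟨eq1, eq1.trans eq2, ?_⟩
  rw [eq1.trans eq2]
  have hco : (((List.ofFn fun i => (X i ^ (N : ℤ)) ^ k i).prod : Aˣ) : A)
      = (List.ofFn fun i => (((X i ^ (N : ℤ)) ^ k i : Aˣ) : A)).prod := by
    rw [show (((List.ofFn fun i => (X i ^ (N : ℤ)) ^ k i).prod : Aˣ) : A)
        = (Units.coeHom A) (List.ofFn fun i => (X i ^ (N : ℤ)) ^ k i).prod from rfl,
      map_list_prod, List.map_ofFn]
    rfl
  rw [hco]
  apply Subalgebra.list_prod_mem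
  intro x hx
  rw [List.mem_ofFn] at hx
  obtain ⟨i, rfl⟩ := hx
  try dsimp only
  obtain ⟨m, hm | hm⟩ := Int.eq_nat_or_neg (k i)
  · rw [hm]
    have hv : (((X i ^ (N : ℤ)) ^ (m : ℤ) : Aˣ) : A) = ((X i : A) ^ N) ^ m := by
      rw [zpow_natCast, zpow_natCast, Units.val_pow_eq_pow_val, Units.val_pow_eq_pow_val]
    rw [hv]
    refine Subalgebra.pow_mem _ ?_ m
    exact Algebra.subset_adjoin (Or.inl ⟨i, rfl⟩)
  · rw [hm]
    have hu : (X i ^ (N : ℤ)) ^ (-(m : ℤ)) = ((X i)⁻¹ ^ N) ^ m := by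
      group
    have hv : (((X i ^ (N : ℤ)) ^ (-(m : ℤ)) : Aˣ) : A)
        = ((((X i)⁻¹ : Aˣ) : A) ^ N) ^ m := by
      rw [hu, Units.val_pow_eq_pow_val, Units.val_pow_eq_pow_val]
    rw [hv]
    refine Subalgebra.pow_mem _ ?_ m
    exact Algebra.subset_adjoin (Or.inr ⟨i, rfl⟩)
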